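/- arXiv:2505.09120 — 2 statements merged into one kernel-verified Lean document; each statement's English description precedes it below -/
import Mathlib

section
/- Let S be a triangulated category with a bounded-above t-structure, equipped with the metric M_i = S^{≥ i}. A sequence E_1 → E_2 → E_3 → ⋯ in S is Cauchy with respect to this metric if and only if for every integer n the sequence of truncations E_*^{≤ n} eventually stabilizes. -/
open CategoryTheory CategoryTheory.Limits CategoryTheory.Pretriangulated ZeroObject

universe v u v₂ u₂

namespace Paper

variable (T : Type u) [Category.{v} T] [HasZeroObject T] [HasShift T ℤ]
  [Preadditive T] [∀ n : ℤ, (shiftFunctor T n).Additive] [Pretriangulated T]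

/-- A t-structure on the triangulated category `T`, packaged together with a choice of
truncation functors and of the natural maps between them. -/
structure TData : Type (max u v) where
  le : ℤ → Set T
  ge : ℤ → Set T
  le_iso : ∀ n ⦃X Y : T⦄, (X ≅ Y) → X ∈ le n → Y ∈ le n
  ge_iso : ∀ n ⦃X Y : T⦄, (X ≅ Y) → X ∈ ge n → Y ∈ ge n
  le_mono : ∀ ⦃n m : ℤ⦄, n ≤ m → le n ⊆ le m
  ge_anti : ∀ ⦃n m : ℤ⦄, n ≤ m → ge m ⊆ ge n
  le_shift : ∀ (n : ℤ) ⦃X : T⦄, X ∈ le n → X⟦(1 : ℤ)⟧ ∈ le (n - 1)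
  ge_shift : ∀ (n : ℤ) ⦃X : T⦄, X ∈ ge n → X⟦(1 : ℤ)⟧ ∈ ge (n - 1)
  hom_zero : ∀ ⦃n m : ℤ⦄, n < m → ∀ ⦃X Y : T⦄, X ∈ le n → Y ∈ ge m →
    ∀ f : X ⟶ Y, f = 0
  truncLE : ℤ → T ⥤ T
  truncGE : ℤ → T ⥤ T
  truncLEπ : ∀ n, truncLE n ⟶ 𝟭 T
  truncGEι : ∀ n, 𝟭 T ⟶ truncGE n
  truncLE_mem : ∀ n X, (truncLE n).obj X ∈ le n
  truncGE_mem : ∀ n X, (truncGE n).obj X ∈ ge n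
  trunc_triangle : ∀ (n : ℤ) (X : T), ∃ h,
    Triangle.mk ((truncLEπ n).app X) ((truncGEι (n + 1)).app X) h ∈ distTriang T
  truncLEle : ∀ ⦃n m : ℤ⦄, n ≤ m → (truncLE n ⟶ truncLE m)
  truncLEle_refl : ∀ n : ℤ, truncLEle (le_refl n) = 𝟙 (truncLE n)
  truncLEle_trans : ∀ ⦃n m k : ℤ⦄ (h₁ : n ≤ m) (h₂ : m ≤ k),
    truncLEle h₁ ≫ truncLEle h₂ = truncLEle (h₁.trans h₂)
  truncLEle_π : ∀ ⦃n m : ℤ⦄ (h : n ≤ m), truncLEle h ≫ truncLEπ m = truncLEπ n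


/-- The cone of `f` lies in `P`: every completion of `f` to a distinguished triangle
has its third object in `P`. -/
def coneIn (P : Set T) {X Y : T} (f : X ⟶ Y) : Prop :=
  ∀ (Z : T) (g : Y ⟶ Z) (h : Z ⟶ X⟦(1 : ℤ)⟧),
    Triangle.mk f g h ∈ (distTriang T) → Z ∈ P

variable {T}

/-- Maps from `le a` into a negative shift of `ge b` vanish, provided `a - 1 < b`. -/
lemma hom_to_neg_shift_zero (t : TData T) {a b : ℤ} (hab : a - 1 < b)
    {B Z : T} (hB : B ∈ t.le a) (hZ : Z ∈ t.ge b) (g : B ⟶ Z⟦(-1 : ℤ)⟧) : g = 0 := by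
  apply (shiftFunctor T (1 : ℤ)).map_injective
  rw [Functor.map_zero]
  have e : ((Z⟦(-1 : ℤ)⟧)⟦(1 : ℤ)⟧ : T) ≅ Z :=
    (shiftFunctorCompIsoId T (-1 : ℤ) (1 : ℤ) (by ring)).app Z
  have h0 : g⟦(1 : ℤ)⟧' ≫ e.hom = 0 :=
    t.hom_zero hab (t.le_shift a hB) hZ _
  rw [← Category.comp_id (g⟦(1 : ℤ)⟧'), ← e.hom_inv_id, ← Category.assoc, h0, zero_comp]

/-- If the truncation map `π : X^{≤ m} → X` vanishes then `X ∈ ge (m+1)`. -/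
lemma mem_ge_of_π_zero (t : TData T) (m : ℤ) (X : T)
    (hπ : (t.truncLEπ m).app X = 0) : X ∈ t.ge (m + 1) := by
  obtain ⟨h, hT⟩ := t.trunc_triangle m X
  -- get s : L⟦1⟧ ⟶ G with 𝟙 = s ≫ h
  obtain ⟨s, hs⟩ := Triangle.coyoneda_exact₁ _ hT
    (𝟙 (((t.truncLE m).obj X)⟦(1 : ℤ)⟧)) (by
      show 𝟙 _ ≫ ((t.truncLEπ m).app X)⟦(1 : ℤ)⟧' = 0
      rw [hπ, Functor.map_zero, comp_zero])
  have hs0 : s = 0 := by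
    refine t.hom_zero (show m - 1 < m + 1 by omega) ?_ (t.truncGE_mem (m + 1) X) s
    exact t.le_shift m (t.truncLE_mem m X)
  have hL : IsZero (((t.truncLE m).obj X)⟦(1 : ℤ)⟧) := by
    rw [IsZero.iff_id_eq_zero, hs, hs0, zero_comp]
    rfl
  have hL' : IsZero ((t.truncLE m).obj X) := by
    rw [IsZero.iff_id_eq_zero]
    apply (shiftFunctor T (1 : ℤ)).map_injective
    rw [CategoryTheory.Functor.map_id, CategoryTheory.Functor.map_zero]
    exact hL.eq_of_src _ _
  have hi : IsIso ((t.truncGEι (m + 1)).app X) :=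
    (Triangle.isZero₁_iff_isIso₂ _ hT).1 hL'
  exact t.ge_iso (m + 1) (asIso ((t.truncGEι (m + 1)).app X)).symm (t.truncGE_mem (m + 1) X)

/-- If the map `ι : X → X^{≥ m+1}` vanishes then `π : X^{≤ m} → X` is an isomorphism. -/
lemma isIso_π_of_ι_zero (t : TData T) (m : ℤ) (X : T)
    (hι : (t.truncGEι (m + 1)).app X = 0) : IsIso ((t.truncLEπ m).app X) := by
  obtain ⟨h, hT⟩ := t.trunc_triangle m X
  obtain ⟨r, hr⟩ := Triangle.yoneda_exact₃ _ hT (𝟙 ((t.truncGE (m + 1)).obj X)) (by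
    show (t.truncGEι (m + 1)).app X ≫ 𝟙 _ = 0
    rw [hι, zero_comp])
  have hr0 : r = 0 := by
    refine t.hom_zero (show m - 1 < m + 1 by omega) ?_ (t.truncGE_mem (m + 1) X) r
    exact t.le_shift m (t.truncLE_mem m X)
  have hG : IsZero ((t.truncGE (m + 1)).obj X) := by
    rw [IsZero.iff_id_eq_zero, hr, hr0, comp_zero]
    rfl
  exact (Triangle.isZero₃_iff_isIso₁ _ hT).1 hG

/-- `le` is closed under the inverse shift, with a degree change. -/
lemma le_neg_shift (t : TData T) {n : ℤ} {X : T} (hX : X ∈ t.le n) :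
    (X⟦(-1 : ℤ)⟧ : T) ∈ t.le (n + 1) := by
  set Y : T := X⟦(-1 : ℤ)⟧ with hY
  have hι : (t.truncGEι ((n + 1) + 1)).app Y = 0 := by
    apply (shiftFunctor T (1 : ℤ)).map_injective
    rw [Functor.map_zero]
    have e : ((X⟦(-1 : ℤ)⟧)⟦(1 : ℤ)⟧ : T) ≅ X :=
      (shiftFunctorCompIsoId T (-1 : ℤ) (1 : ℤ) (by ring)).app X
    have hG : (((t.truncGE ((n + 1) + 1)).obj Y)⟦(1 : ℤ)⟧ : T) ∈ t.ge (n + 1) := by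
      refine t.ge_anti (show (n : ℤ) + 1 ≤ ((n + 1) + 1) - 1 by omega) ?_
      exact t.ge_shift _ (t.truncGE_mem _ Y)
    have h0 : e.inv ≫ ((t.truncGEι ((n + 1) + 1)).app Y)⟦(1 : ℤ)⟧' = 0 :=
      t.hom_zero (show (n : ℤ) < n + 1 by omega) hX hG _
    have h1 := e.hom ≫= h0
    rw [comp_zero, ← Category.assoc, e.hom_inv_id, Category.id_comp] at h1
    exact h1
  have := isIso_π_of_ι_zero t (n + 1) Y hι
  exact t.le_iso (n + 1) (asIso ((t.truncLEπ (n + 1)).app Y)) (t.truncLE_mem (n + 1) Y)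

/-- For a distinguished triangle with third object in `ge (m+1)`, composition with the
first morphism is bijective on maps from objects of `le m`. -/
lemma comp_bij (t : TData T) {m : ℤ} (Tr : Triangle T) (hTr : Tr ∈ distTriang T)
    (h3 : Tr.obj₃ ∈ t.ge (m + 1)) {B : T} (hB : B ∈ t.le m) :
    Function.Bijective (fun φ : B ⟶ Tr.obj₁ => φ ≫ Tr.mor₁) := by
  constructor
  · intro φ₁ φ₂ hφ
    have hφ' : φ₁ ≫ Tr.mor₁ = φ₂ ≫ Tr.mor₁ := hφ
    have h0 : (φ₁ - φ₂) ≫ Tr.mor₁ = 0 := by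
      rw [Preadditive.sub_comp, hφ', sub_self]
    obtain ⟨g, hg⟩ := Triangle.coyoneda_exact₂ _ (inv_rot_of_distTriang _ hTr) (φ₁ - φ₂) h0
    have hg0 : g = 0 := hom_to_neg_shift_zero t (show m - 1 < m + 1 by omega) hB h3 g
    have : φ₁ - φ₂ = 0 := by rw [hg, hg0, zero_comp]; rfl
    exact sub_eq_zero.mp this
  · intro ψ
    have h0 : ψ ≫ Tr.mor₂ = 0 := t.hom_zero (show m < m + 1 by omega) hB h3 _
    obtain ⟨φ, hφ⟩ := Triangle.coyoneda_exact₂ _ hTr ψ h0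
    exact ⟨φ, hφ.symm⟩

/-- Universal property of the truncation: for `B ∈ le m`, composition with
`π : X^{≤m} → X` is bijective. -/
lemma truncLE_π_bij (t : TData T) (m : ℤ) (X : T) {B : T} (hB : B ∈ t.le m) :
    Function.Bijective
      (fun φ : B ⟶ (t.truncLE m).obj X => φ ≫ (t.truncLEπ m).app X) := by
  obtain ⟨h, hT⟩ := t.trunc_triangle m X
  exact comp_bij t _ hT (t.truncGE_mem (m + 1) X) hB

/-- If the cone of `f` lies in `ge (m+1)`, then `truncLE m` applied to `f` is an iso. -/
lemma isIso_truncLE_map (t : TData T) {m : ℤ} {X Y : T} (f : X ⟶ Y)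
    {Z : T} {g : Y ⟶ Z} {h : Z ⟶ X⟦(1 : ℤ)⟧}
    (hT : Triangle.mk f g h ∈ distTriang T) (hZ : Z ∈ t.ge (m + 1)) :
    IsIso ((t.truncLE m).map f) := by
  have nat : ∀ {W V : T} (u : W ⟶ V),
      (t.truncLE m).map u ≫ (t.truncLEπ m).app V = (t.truncLEπ m).app W ≫ u := by
    intro W V u
    simpa using ((t.truncLEπ m).naturality u)
  have key : ∀ (B : T), B ∈ t.le m → Function.Bijective
      (fun φ : B ⟶ (t.truncLE m).obj X => φ ≫ (t.truncLE m).map f) := by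
    intro B hB
    have u := truncLE_π_bij t m X hB
    have w := truncLE_π_bij t m Y hB
    have v := comp_bij t _ hT hZ hB
    constructor
    · intro φ₁ φ₂ hφ
      have hφ' : φ₁ ≫ (t.truncLE m).map f = φ₂ ≫ (t.truncLE m).map f := hφ
      apply u.1
      apply v.1
      show (φ₁ ≫ (t.truncLEπ m).app X) ≫ f = (φ₂ ≫ (t.truncLEπ m).app X) ≫ f
      rw [Category.assoc, Category.assoc, ← nat f, ← Category.assoc,
        ← Category.assoc, hφ']
    · intro ψ
      obtain ⟨χ, hχ⟩ := v.2 (ψ ≫ (t.truncLEπ m).app Y)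
      have hχ' : χ ≫ f = ψ ≫ (t.truncLEπ m).app Y := hχ
      obtain ⟨φ, hφ⟩ := u.2 χ
      have hφ' : φ ≫ (t.truncLEπ m).app X = χ := hφ
      refine ⟨φ, w.1 ?_⟩
      show (φ ≫ (t.truncLE m).map f) ≫ (t.truncLEπ m).app Y = ψ ≫ (t.truncLEπ m).app Y
      rw [Category.assoc, nat f, ← Category.assoc, hφ']
      exact hχ'
  obtain ⟨ginv, hginv⟩ := (key _ (t.truncLE_mem m Y)).2 (𝟙 _)
  have hginv' : ginv ≫ (t.truncLE m).map f = 𝟙 _ := hginv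
  have hig : (t.truncLE m).map f ≫ ginv = 𝟙 _ := by
    apply (key _ (t.truncLE_mem m X)).1
    show ((t.truncLE m).map f ≫ ginv) ≫ (t.truncLE m).map f = 𝟙 _ ≫ (t.truncLE m).map f
    rw [Category.assoc, hginv', Category.comp_id, Category.id_comp]
  exact ⟨ginv, hig, hginv'⟩

/-- Converse bijectivity: if `truncLE m f` is an iso, composition with `f` is
bijective on maps from objects of `le m`. -/
lemma comp_bij_of_isIso (t : TData T) {m : ℤ} {X Y : T} (f : X ⟶ Y)
    (hf : IsIso ((t.truncLE m).map f)) {B : T} (hB : B ∈ t.le m) :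
    Function.Bijective (fun φ : B ⟶ X => φ ≫ f) := by
  have nat : (t.truncLE m).map f ≫ (t.truncLEπ m).app Y = (t.truncLEπ m).app X ≫ f := by
    simpa using ((t.truncLEπ m).naturality f)
  have u := truncLE_π_bij t m X hB
  have w := truncLE_π_bij t m Y hB
  constructor
  · intro χ₁ χ₂ hχ
    have hχ' : χ₁ ≫ f = χ₂ ≫ f := hχ
    obtain ⟨φ₁, h1⟩ := u.2 χ₁
    obtain ⟨φ₂, h2⟩ := u.2 χ₂
    have h1' : φ₁ ≫ (t.truncLEπ m).app X = χ₁ := h1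
    have h2' : φ₂ ≫ (t.truncLEπ m).app X = χ₂ := h2
    have heq : φ₁ ≫ (t.truncLE m).map f = φ₂ ≫ (t.truncLE m).map f := by
      apply w.1
      show (φ₁ ≫ (t.truncLE m).map f) ≫ (t.truncLEπ m).app Y =
        (φ₂ ≫ (t.truncLE m).map f) ≫ (t.truncLEπ m).app Y
      rw [Category.assoc, Category.assoc, nat, ← Category.assoc, ← Category.assoc,
        h1', h2', hχ']
    have hφ : φ₁ = φ₂ := by
      have := heq =≫ inv ((t.truncLE m).map f)
      simpa using this
    show χ₁ = χ₂
    rw [← h1', ← h2', hφ]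
  · intro ψ
    obtain ⟨ρ, hρ⟩ := w.2 ψ
    have hρ' : ρ ≫ (t.truncLEπ m).app Y = ψ := hρ
    refine ⟨(ρ ≫ inv ((t.truncLE m).map f)) ≫ (t.truncLEπ m).app X, ?_⟩
    show ((ρ ≫ inv ((t.truncLE m).map f)) ≫ (t.truncLEπ m).app X) ≫ f = ψ
    rw [Category.assoc, ← nat, ← Category.assoc, Category.assoc ρ, IsIso.inv_hom_id,
      Category.comp_id, hρ']

/-- If composition with `f` is bijective on maps from `le q`, every cone of `f`
lies in `ge q`. -/
lemma cone_mem_ge (t : TData T) {q : ℤ} {X Y : T} (f : X ⟶ Y)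
    {Z : T} {g : Y ⟶ Z} {h : Z ⟶ X⟦(1 : ℤ)⟧}
    (hT : Triangle.mk f g h ∈ distTriang T)
    (hf : ∀ B : T, B ∈ t.le q → Function.Bijective (fun φ : B ⟶ X => φ ≫ f)) :
    Z ∈ t.ge q := by
  set A : T := (t.truncLE (q - 1)).obj Z with hA_def
  have hA : A ∈ t.le q := t.le_mono (by omega) (t.truncLE_mem _ Z)
  have hA' : (A⟦(-1 : ℤ)⟧ : T) ∈ t.le q := by
    have := le_neg_shift t (t.truncLE_mem (q - 1) Z)
    exact t.le_mono (by omega) this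
  set φ : A ⟶ Z := (t.truncLEπ (q - 1)).app Z with hφ_def
  have hh : h ≫ f⟦(1 : ℤ)⟧' = 0 := comp_distTriang_mor_zero₃₁ _ hT
  -- show φ ≫ h = 0 by transposing along the shift
  have hψ0 : φ ≫ h = 0 := by
    have e : ((A⟦(-1 : ℤ)⟧)⟦(1 : ℤ)⟧ : T) ≅ A :=
      (shiftFunctorCompIsoId T (-1 : ℤ) (1 : ℤ) (by ring)).app A
    obtain ⟨ψ', hψ'⟩ := (shiftFunctor T (1 : ℤ)).map_surjective (e.hom ≫ φ ≫ h)
    have hψ'f : ψ' ≫ f = 0 := by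
      apply (shiftFunctor T (1 : ℤ)).map_injective
      rw [Functor.map_comp, hψ', Functor.map_zero, Category.assoc, Category.assoc, hh,
        comp_zero, comp_zero]
    have : ψ' = 0 := by
      apply (hf _ hA').1
      show ψ' ≫ f = (0 : A⟦(-1 : ℤ)⟧ ⟶ X) ≫ f
      rw [hψ'f, zero_comp]
    have : e.hom ≫ φ ≫ h = 0 := by rw [← hψ', this, Functor.map_zero]
    have := e.inv ≫= this
    simpa using this
  obtain ⟨ξ, hξ⟩ := Triangle.coyoneda_exact₃ _ hT φ hψ0
  have hξ' : φ = ξ ≫ g := hξ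
  obtain ⟨η, hη⟩ := (hf A hA).2 ξ
  have hη' : η ≫ f = ξ := hη
  have hfg : f ≫ g = 0 := comp_distTriang_mor_zero₁₂ _ hT
  have hφ0 : φ = 0 := by
    rw [hξ', ← hη']
    exact (Category.assoc _ _ _).trans ((η ≫= hfg).trans comp_zero)
  have := mem_ge_of_π_zero t (q - 1) Z hφ0
  exact t.ge_anti (by omega) this

variable (T)

/-- Lemma 95.2: for a bounded-above t-structure, with the (very good)
metric `Mᵢ = T^{≥ i}`, a sequence is Cauchy iff all of its truncation sequences
`E^{≤ n}` eventually stabilize. -/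
theorem statement16 (t : TData T) (hb : ∀ X : T, ∃ i : ℤ, X ∈ t.le i) (E : ℕ ⥤ T) :
    (∀ n : ℕ, ∃ N : ℕ, ∀ i j : ℕ, N ≤ i → ∀ h : i ≤ j,
        coneIn T (t.ge (n : ℤ)) (E.map (homOfLE h))) ↔
    (∀ n : ℤ, ∃ N : ℕ, ∀ i j : ℕ, N ≤ i → ∀ h : i ≤ j,
        IsIso ((t.truncLE n).map (E.map (homOfLE h)))) := by
  constructor
  · intro hC n
    set k : ℕ := (n + 1).toNat with hk_def
    have hk : n + 1 ≤ (k : ℤ) := Int.self_le_toNat _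
    obtain ⟨N, hN⟩ := hC k
    refine ⟨N, fun i j hi h => ?_⟩
    obtain ⟨Z, g, hmap, hT⟩ :=
      Pretriangulated.distinguished_cocone_triangle (E.map (homOfLE h))
    have hZ : Z ∈ t.ge (k : ℤ) := hN i j hi h Z g hmap hT
    exact isIso_truncLE_map t _ hT (t.ge_anti hk hZ)
  · intro hS n
    obtain ⟨N, hN⟩ := hS (n : ℤ)
    refine ⟨N, fun i j hi h Z g hh hT => ?_⟩
    have hf := hN i j hi h
    exact cone_mem_ge t _ hT (fun B hB => comp_bij_of_isIso t _ hf hB)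

end Paper
end

section
/- Let T be a triangulated category with countable coproducts and a nondegenerate t-structure such that countable coproducts of objects of T^{≥0} lie in T^{≥ -r} for some r > 0. Then every object of T^+ is the homotopy colimit of a Cauchy sequence in T^b (with respect to the metric M_i = T^b ∩ T^{≥ i}), and every object of T is the homotopy colimit of a Cauchy sequence in T^- (with respect to the metric M_i = T^- ∩ T^{≥ i}). -/
open CategoryTheory CategoryTheory.Limits CategoryTheory.Pretriangulated ZeroObject

universe v u v₂ u₂

namespace Paper

variable (T : Type u) [Category.{v} T] [HasZeroObject T] [HasShift T ℤ]
  [Preadditive T] [∀ n : ℤ, (shiftFunctor T n).Additive] [Pretriangulated T]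

variable [HasColimitsOfShape (Discrete ℕ) T]

/-- The "shift by one" endomorphism of `⊕ᵢ Aᵢ` for a sequence `A`, whose components are
`Aᵢ ⟶ A_{i+1} ⟶ ⊕ᵢ Aᵢ`. -/
noncomputable def seqShift (A : ℕ ⥤ T) : (∐ fun i => A.obj i) ⟶ ∐ fun i => A.obj i :=
  Sigma.desc fun i => A.map (homOfLE (Nat.le_succ i)) ≫ Sigma.ι (fun i => A.obj i) (i + 1)

/-- `π : ⊕ᵢ Aᵢ ⟶ X` exhibits `X` as the homotopy colimit of the sequence `A`: the map
`1 − shift` followed by `π` extends to a distinguished triangle. -/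
def IsHocolim (A : ℕ ⥤ T) (X : T) (π : (∐ fun i => A.obj i) ⟶ X) : Prop :=
  ∃ w, Triangle.mk (𝟙 (∐ fun i => A.obj i) - seqShift T A) π w ∈ distTriang T

set_option linter.unusedSectionVars false
set_option linter.unusedVariables false
set_option maxHeartbeats 1000000

section Aux
variable {T}

/-- shift(-1) ⊣ shift(1) -/
noncomputable def adjNP : shiftFunctor T (-1 : ℤ) ⊣ shiftFunctor T (1 : ℤ) :=
  (shiftEquiv' T (-1 : ℤ) (1 : ℤ) (by omega)).toAdjunction

/-- shift(1) ⊣ shift(-1) -/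
noncomputable def adjPN : shiftFunctor T (1 : ℤ) ⊣ shiftFunctor T (-1 : ℤ) :=
  (shiftEquiv' T (1 : ℤ) (-1 : ℤ) (by omega)).toAdjunction

lemma adj_homEquiv_zero {F G : T ⥤ T} [F.Additive] [G.Additive] (adj : F ⊣ G) {X Y : T} :
    adj.homEquiv X Y 0 = 0 := by
  rw [Adjunction.homEquiv_unit, Functor.map_zero, comp_zero]

lemma adj_homEquiv_symm_zero {F G : T ⥤ T} [F.Additive] [G.Additive] (adj : F ⊣ G) {X Y : T} :
    (adj.homEquiv X Y).symm 0 = 0 := by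
  rw [Adjunction.homEquiv_counit, Functor.map_zero, zero_comp]

namespace TData

variable (t : TData T)

lemma homZeroNegShift {n m : ℤ} (h : n < m - 1) {X W : T} (hX : X ∈ t.le n)
    (hW : W ∈ t.ge m) (f : X⟦(-1 : ℤ)⟧ ⟶ W) : f = 0 := by
  -- transfer along adjNP : (X⟦-1⟧ ⟶ W) ≃ (X ⟶ W⟦1⟧)
  have h1 : (adjNP.homEquiv X W) f = 0 :=
    t.hom_zero h hX (t.ge_shift m hW) _
  have := congrArg (adjNP.homEquiv X W).symm h1
  rw [Equiv.symm_apply_apply] at this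
  rw [this, adj_homEquiv_symm_zero]

lemma homZeroIntoNegShift {n m : ℤ} (h : n - 1 < m) {X W : T} (hX : X ∈ t.le n)
    (hW : W ∈ t.ge m) (f : X ⟶ W⟦(-1 : ℤ)⟧) : f = 0 := by
  -- transfer along adjPN : (X⟦1⟧ ⟶ W) ≃ (X ⟶ W⟦-1⟧)
  have h1 : (adjPN.homEquiv X W).symm f = 0 :=
    t.hom_zero h (by simpa using t.le_shift n hX) hW _
  have := congrArg (adjPN.homEquiv X W) h1
  rw [Equiv.apply_symm_apply] at this
  rw [this, adj_homEquiv_zero]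

/-- Detection: if all maps to `ge (m+1)` objects vanish then `Z ∈ le m`. -/
lemma mem_le_of_homzero {Z : T} (m : ℤ)
    (H : ∀ W, W ∈ t.ge (m + 1) → ∀ f : Z ⟶ W, f = 0) : Z ∈ t.le m := by
  obtain ⟨h3, hdt⟩ := t.trunc_triangle m Z
  set Tri := Triangle.mk ((t.truncLEπ m).app Z) ((t.truncGEι (m + 1)).app Z) h3 with hTri
  -- mor₂ = 0
  have hι : Tri.mor₂ = 0 := H _ (t.truncGE_mem _ _) _
  -- rotate; id of obj₃ factors through obj₁⟦1⟧
  have hrot := rot_of_distTriang _ hdt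
  obtain ⟨g, hg⟩ := Triangle.yoneda_exact₂ _ hrot (𝟙 Tri.rotate.obj₂) (by
    rw [Category.comp_id]; exact hι)
  have hgz : g = 0 := t.hom_zero (show m - 1 < m + 1 by omega)
    (t.le_shift m (t.truncLE_mem m Z)) (t.truncGE_mem _ _) g
  have hzero : IsZero Tri.obj₃ := by
    rw [IsZero.iff_id_eq_zero]
    rw [hgz, comp_zero] at hg; exact hg
  have : IsIso Tri.mor₁ := (Triangle.isZero₃_iff_isIso₁ _ hdt).1 hzero
  exact t.le_iso m (@asIso _ _ _ _ Tri.mor₁ this) (t.truncLE_mem m Z)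

/-- Detection: if all maps from `le (m-1)` objects vanish then `Z ∈ ge m`. -/
lemma mem_ge_of_homzero {Z : T} (m : ℤ)
    (H : ∀ W, W ∈ t.le (m - 1) → ∀ f : W ⟶ Z, f = 0) : Z ∈ t.ge m := by
  obtain ⟨h3, hdt⟩ := t.trunc_triangle (m - 1) Z
  set Tri := Triangle.mk ((t.truncLEπ (m - 1)).app Z) ((t.truncGEι (m - 1 + 1)).app Z) h3
    with hTri
  have hπ : Tri.mor₁ = 0 := H _ (t.truncLE_mem _ _) _
  have hrot := inv_rot_of_distTriang _ hdt
  obtain ⟨g, hg⟩ := Triangle.coyoneda_exact₂ _ hrot (𝟙 Tri.invRotate.obj₂) (by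
    rw [Category.id_comp]; exact hπ)
  have hgz : g = 0 := t.homZeroIntoNegShift (show m - 1 - 1 < m - 1 + 1 by omega)
    (t.truncLE_mem _ _) (t.truncGE_mem _ _) g
  have hzero : IsZero Tri.invRotate.obj₂ := by
    rw [IsZero.iff_id_eq_zero]
    rw [hgz, zero_comp] at hg; exact hg
  have hzero' : IsZero Tri.obj₁ := hzero
  have : IsIso Tri.mor₂ := by
    have := (Triangle.isZero₁_iff_isIso₂ _ hdt).1 hzero'
    exact this
  have : Z ∈ t.ge (m - 1 + 1) := t.ge_iso _ (asIso Tri.mor₂).symm (t.truncGE_mem _ _)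
  simpa using this

lemma le_shift_neg {n : ℤ} {X : T} (hX : X ∈ t.le n) : X⟦(-1 : ℤ)⟧ ∈ t.le (n + 1) := by
  apply t.mem_le_of_homzero
  intro W hW f
  exact t.homZeroNegShift (show n < (n + 1 + 1) - 1 by omega) hX hW f

lemma ge_shift_neg {n : ℤ} {X : T} (hX : X ∈ t.ge n) : X⟦(-1 : ℤ)⟧ ∈ t.ge (n + 1) := by
  apply t.mem_ge_of_homzero
  intro W hW f
  exact t.homZeroIntoNegShift (show n + 1 - 1 - 1 < n by omega) hW hX f

lemma zero_mem_le (n : ℤ) {Z : T} (hZ : IsZero Z) : Z ∈ t.le n :=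
  t.mem_le_of_homzero n (fun _ _ f => hZ.eq_of_src f 0)

lemma zero_mem_ge (n : ℤ) {Z : T} (hZ : IsZero Z) : Z ∈ t.ge n :=
  t.mem_ge_of_homzero n (fun _ _ f => hZ.eq_of_tgt f 0)

lemma ge_shift_nat {n : ℤ} {X : T} (hX : X ∈ t.ge n) (a : ℕ) :
    X⟦(a : ℤ)⟧ ∈ t.ge (n - a) := by
  induction a with
  | zero => simpa using t.ge_iso _ ((shiftFunctorZero T ℤ).symm.app X) hX
  | succ k ih =>
    have h2 := t.ge_shift _ ih
    have e := (shiftFunctorAdd' T (k : ℤ) (1 : ℤ) ((k + 1 : ℕ) : ℤ) (by push_cast; ring)).app X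
    have := t.ge_iso _ e.symm h2
    convert this using 2
    push_cast; ring

lemma ge_shift_neg_nat {n : ℤ} {X : T} (hX : X ∈ t.ge n) (a : ℕ) :
    X⟦-(a : ℤ)⟧ ∈ t.ge (n + a) := by
  induction a with
  | zero => simpa using t.ge_iso _ ((shiftFunctorZero T ℤ).symm.app X) hX
  | succ k ih =>
    have h2 := t.ge_shift_neg ih
    have e := (shiftFunctorAdd' T (-(k : ℤ)) (-1 : ℤ) (-((k + 1 : ℕ) : ℤ)) (by push_cast; ring)).app X
    have := t.ge_iso _ e.symm h2
    convert this using 2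
    push_cast; ring


lemma pi_postcomp_inj {m n : ℤ} (hmn : m ≤ n) (X : T) {W : T} (hW : W ∈ t.le m)
    {f₁ f₂ : W ⟶ (t.truncLE n).obj X}
    (h : f₁ ≫ (t.truncLEπ n).app X = f₂ ≫ (t.truncLEπ n).app X) : f₁ = f₂ := by
  obtain ⟨h3, hdt⟩ := t.trunc_triangle n X
  have hsub : (f₁ - f₂) ≫ (t.truncLEπ n).app X = 0 := by
    simp only [Preadditive.sub_comp]
    rw [sub_eq_zero]; exact h
  have hrot := inv_rot_of_distTriang _ hdt
  obtain ⟨g, hg⟩ := Triangle.coyoneda_exact₂ _ hrot (f₁ - f₂) (by exact hsub)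
  have hgz : g = 0 := t.homZeroIntoNegShift (show m - 1 < n + 1 by omega) hW
    (t.truncGE_mem _ _) g
  rw [← sub_eq_zero]
  rw [hgz, zero_comp] at hg; exact hg

lemma pi_postcomp_surj {m n : ℤ} (hmn : m ≤ n) (X : T) {W : T} (hW : W ∈ t.le m)
    (y : W ⟶ X) : ∃ f : W ⟶ (t.truncLE n).obj X, f ≫ (t.truncLEπ n).app X = y := by
  obtain ⟨h3, hdt⟩ := t.trunc_triangle n X
  have hy : y ≫ (t.truncGEι (n + 1)).app X = 0 :=
    t.hom_zero (show m < n + 1 by omega) hW (t.truncGE_mem _ _) _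
  obtain ⟨g, hg⟩ := Triangle.coyoneda_exact₂ _ hdt y hy
  exact ⟨g, hg.symm⟩

/-- The comparison triangle: for `i ≤ j` there is a distinguished triangle
`truncLE i Y ⟶ truncLE j Y ⟶ Z` with `Z ∈ ge (i+1) ∩ le j`. -/
lemma cauchy_triangle {i j : ℤ} (hij : i ≤ j) (Y : T) :
    ∃ (Z : T) (g : (t.truncLE j).obj Y ⟶ Z) (h : Z ⟶ ((t.truncLE i).obj Y)⟦(1 : ℤ)⟧),
      (Triangle.mk ((t.truncLEle hij).app Y) g h ∈ distTriang T) ∧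
      Z ∈ t.ge (i + 1) ∧ Z ∈ t.le j := by
  obtain ⟨h3, hdt⟩ := t.trunc_triangle i ((t.truncLE j).obj Y)
  have hcι : (t.truncLEle hij).app Y ≫ (t.truncGEι (i + 1)).app ((t.truncLE j).obj Y) = 0 :=
    t.hom_zero (show i < i + 1 by omega) (t.truncLE_mem _ _) (t.truncGE_mem _ _) _
  obtain ⟨e₀, he₀⟩ := Triangle.coyoneda_exact₂ _ hdt ((t.truncLEle hij).app Y) hcι
  let e : (t.truncLE i).obj Y ⟶ (t.truncLE i).obj ((t.truncLE j).obj Y) := e₀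
  have he' : (t.truncLEle hij).app Y =
      e ≫ (t.truncLEπ i).app ((t.truncLE j).obj Y) := he₀
  clear he₀
  have keyπ : (t.truncLEle hij).app Y ≫ (t.truncLEπ j).app Y = (t.truncLEπ i).app Y := by
    have := congrArg (fun (α : t.truncLE i ⟶ 𝟭 T) => α.app Y) (t.truncLEle_π hij)
    simpa using this
  have hcomm : ∀ {W : T} (f : W ⟶ (t.truncLE i).obj Y),
      f ≫ e ≫ (t.truncLEπ i).app ((t.truncLE j).obj Y) ≫ (t.truncLEπ j).app Y =
      f ≫ (t.truncLEπ i).app Y := by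
    intro W f
    have h2 : e ≫ (t.truncLEπ i).app ((t.truncLE j).obj Y) ≫ (t.truncLEπ j).app Y =
        (t.truncLEπ i).app Y := by
      rw [← Category.assoc, ← he', keyπ]
    rw [h2]
  have einj : ∀ {W : T}, W ∈ t.le i → ∀ {f₁ f₂ : W ⟶ (t.truncLE i).obj Y},
      f₁ ≫ e = f₂ ≫ e → f₁ = f₂ := by
    intro W hW f₁ f₂ hf
    apply t.pi_postcomp_inj (le_refl i) Y hW
    rw [← hcomm f₁, ← hcomm f₂, ← Category.assoc, hf, Category.assoc]
  have esurj : ∀ {W : T}, W ∈ t.le i →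
      ∀ (y : W ⟶ (t.truncLE i).obj ((t.truncLE j).obj Y)), ∃ f, f ≫ e = y := by
    intro W hW y
    obtain ⟨x, hx⟩ := t.pi_postcomp_surj (le_refl i) Y hW
      (y ≫ (t.truncLEπ i).app ((t.truncLE j).obj Y) ≫ (t.truncLEπ j).app Y)
    refine ⟨x, ?_⟩
    have b1 : (x ≫ e) ≫ (t.truncLEπ i).app ((t.truncLE j).obj Y) =
        y ≫ (t.truncLEπ i).app ((t.truncLE j).obj Y) := by
      apply t.pi_postcomp_inj hij Y hW
      simp only [Category.assoc]
      rw [hcomm x, hx]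
    exact t.pi_postcomp_inj (le_refl i) ((t.truncLE j).obj Y) hW b1
  obtain ⟨s, hs⟩ := esurj (t.truncLE_mem i ((t.truncLE j).obj Y)) (𝟙 _)
  have hes : e ≫ s = 𝟙 _ := by
    apply einj (t.truncLE_mem i Y)
    rw [Category.assoc, hs, Category.comp_id, Category.id_comp]
  haveI hiso : IsIso e := ⟨s, ⟨hes, hs⟩⟩
  have hdt' : Triangle.mk ((t.truncLEle hij).app Y)
      ((t.truncGEι (i + 1)).app ((t.truncLE j).obj Y))
      (h3 ≫ (inv e)⟦(1 : ℤ)⟧') ∈ distTriang T := by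
    refine isomorphic_distinguished _ hdt _ ?_
    refine Triangle.isoMk _ _ (by exact @asIso _ _ ((t.truncLE i).obj Y) ((t.truncLE i).obj ((t.truncLE j).obj Y)) e hiso) (Iso.refl _) (Iso.refl _) ?_ ?_ ?_
    · exact (Category.comp_id _).trans he'
    · exact (Category.comp_id _).trans (Category.id_comp _).symm
    · show (h3 ≫ (inv e)⟦(1 : ℤ)⟧') ≫ e⟦(1 : ℤ)⟧' = 𝟙 _ ≫ h3
      simp
  refine ⟨(t.truncGE (i + 1)).obj ((t.truncLE j).obj Y),
    (t.truncGEι (i + 1)).app ((t.truncLE j).obj Y), h3 ≫ (inv e)⟦(1 : ℤ)⟧', hdt',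
    t.truncGE_mem _ _, ?_⟩
  apply t.mem_le_of_homzero
  intro W hW f
  have hrot := rot_of_distTriang _ hdt
  have hιf : (t.truncGEι (i + 1)).app ((t.truncLE j).obj Y) ≫ f = 0 :=
    t.hom_zero (show j < j + 1 by omega) (t.truncLE_mem _ _) hW _
  obtain ⟨g, hg⟩ := Triangle.yoneda_exact₂ _ hrot f (by exact hιf)
  have hgz : g = 0 := t.hom_zero (show i - 1 < j + 1 by omega)
    (t.le_shift _ (t.truncLE_mem _ _)) hW g
  rw [hgz, comp_zero] at hg; exact hg

section Coprod

variable [HasColimitsOfShape (Discrete ℕ) T]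

lemma sigma_shift_hom_ext (b : ℤ) {X : ℕ → T} {V : T} {u₁ u₂ : (∐ X)⟦b⟧ ⟶ V}
    (h : ∀ j, (Sigma.ι X j)⟦b⟧' ≫ u₁ = (Sigma.ι X j)⟦b⟧' ≫ u₂) : u₁ = u₂ := by
  have adj := (shiftEquiv T b).toAdjunction
  apply (adj.homEquiv (∐ X) V).injective
  apply Sigma.hom_ext
  intro j
  have e1 := adj.homEquiv_naturality_left (Sigma.ι X j) u₁
  have e2 := adj.homEquiv_naturality_left (Sigma.ι X j) u₂
  calc Sigma.ι X j ≫ (adj.homEquiv (∐ X) V) u₁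
      = (adj.homEquiv (X j) V) ((shiftEquiv T b).functor.map (Sigma.ι X j) ≫ u₁) := e1.symm
    _ = (adj.homEquiv (X j) V) ((shiftEquiv T b).functor.map (Sigma.ι X j) ≫ u₂) :=
        congrArg _ (h j)
    _ = Sigma.ι X j ≫ (adj.homEquiv (∐ X) V) u₂ := e2

lemma sigma_shift_desc (b : ℤ) (X : ℕ → T) {V : T} (f : ∀ j, (X j)⟦b⟧ ⟶ V) :
    ∃ u : (∐ X)⟦b⟧ ⟶ V, ∀ j, (Sigma.ι X j)⟦b⟧' ≫ u = f j := by
  have adj := (shiftEquiv T b).toAdjunction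
  refine ⟨(adj.homEquiv (∐ X) V).symm (Sigma.desc fun j => adj.homEquiv _ _ (f j)), fun j => ?_⟩
  apply (adj.homEquiv (X j) V).injective
  have e1 := adj.homEquiv_naturality_left (Sigma.ι X j)
    ((adj.homEquiv (∐ X) V).symm (Sigma.desc fun j => adj.homEquiv _ _ (f j)))
  exact e1.trans (by rw [Equiv.apply_symm_apply]; simp)

/-- A coproduct of distinguished triangles is distinguished. -/
lemma coprod_triangle_dist (X₁ X₂ X₃ : ℕ → T) (f : ∀ i, X₁ i ⟶ X₂ i)
    (g : ∀ i, X₂ i ⟶ X₃ i) (h : ∀ i, X₃ i ⟶ (X₁ i)⟦(1 : ℤ)⟧)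
    (hd : ∀ i, Triangle.mk (f i) (g i) (h i) ∈ distTriang T) :
    Triangle.mk (Sigma.desc fun i => f i ≫ Sigma.ι X₂ i)
      (Sigma.desc fun i => g i ≫ Sigma.ι X₃ i)
      (Sigma.desc fun i => h i ≫ (Sigma.ι X₁ i)⟦(1 : ℤ)⟧') ∈ distTriang T := by
  obtain ⟨W, gW, hW, hdtW⟩ :=
    distinguished_cocone_triangle (Sigma.desc fun i => f i ≫ Sigma.ι X₂ i)
  set TW := Triangle.mk (Sigma.desc fun i => f i ≫ Sigma.ι X₂ i) gW hW with hTW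
  have hcomp : ∀ i, ∃ c : X₃ i ⟶ W,
      (g i ≫ c = Sigma.ι X₂ i ≫ gW) ∧ (h i ≫ (Sigma.ι X₁ i)⟦(1 : ℤ)⟧' = c ≫ hW) := by
    intro i
    obtain ⟨c, hc1, hc2⟩ := complete_distinguished_triangle_morphism
      (Triangle.mk (f i) (g i) (h i)) TW (hd i) hdtW (Sigma.ι X₁ i) (Sigma.ι X₂ i) (by exact (Sigma.ι_desc (fun i => f i ≫ Sigma.ι X₂ i) i).symm)
    exact ⟨c, by exact hc1, by exact hc2⟩
  choose cc hc1 hc2 using hcomp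
  set c : (∐ X₃) ⟶ W := Sigma.desc cc with hcdef
  -- injectivity of precomposition with c
  have hinj : ∀ {V : T} (x : W ⟶ V), c ≫ x = 0 → x = 0 := by
    intro V x hx
    have hcx : ∀ i, cc i ≫ x = 0 := by
      intro i
      have := congrArg (fun q => Sigma.ι X₃ i ≫ q) hx
      simpa [c] using this
    have hgx : gW ≫ x = 0 := by
      apply Sigma.hom_ext
      intro i
      rw [← Category.assoc, ← hc1 i]
      simp [hcx i]
    obtain ⟨u, hu⟩ := Triangle.yoneda_exact₂ _ (rot_of_distTriang _ hdtW) x (by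
      exact hgx)
    -- u : (∐ X₁)⟦1⟧ ⟶ V ; x = hW ≫ u
    have hu' : x = hW ≫ u := hu
    have hvi : ∀ i, ∃ v : (X₂ i)⟦(1 : ℤ)⟧ ⟶ V,
        (Sigma.ι X₁ i)⟦(1 : ℤ)⟧' ≫ u = -(f i)⟦(1 : ℤ)⟧' ≫ v := by
      intro i
      have hrr := rot_of_distTriang _ (rot_of_distTriang _ (hd i))
      have hz : (Triangle.mk (f i) (g i) (h i)).rotate.rotate.mor₁ ≫
          ((Sigma.ι X₁ i)⟦(1 : ℤ)⟧' ≫ u) = 0 := by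
        have : h i ≫ (Sigma.ι X₁ i)⟦(1 : ℤ)⟧' ≫ u = (cc i) ≫ hW ≫ u := by
          exact (Category.assoc _ _ _).symm.trans (((hc2 i) =≫ u).trans (Category.assoc _ _ _))
        refine this.trans ?_
        rw [← hu']; exact hcx i
      obtain ⟨v, hv⟩ := Triangle.yoneda_exact₂ _ hrr _ hz
      exact ⟨v, hv.trans (Preadditive.neg_comp _ _)⟩
    choose vv hvv using hvi
    obtain ⟨v, hv⟩ := sigma_shift_desc (1 : ℤ) X₂ (fun i => -(vv i))
    have hu2 : u = (Sigma.desc fun i => f i ≫ Sigma.ι X₂ i)⟦(1 : ℤ)⟧' ≫ v := by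
      apply sigma_shift_hom_ext (1 : ℤ)
      intro j
      rw [hvv j, ← Category.assoc, ← Functor.map_comp]
      have : (Sigma.ι X₁ j) ≫ (Sigma.desc fun i => f i ≫ Sigma.ι X₂ i) =
          f j ≫ Sigma.ι X₂ j := by simp
      rw [this, Functor.map_comp, Category.assoc, hv j]
      simp [Preadditive.neg_comp, Preadditive.comp_neg]
    rw [hu', hu2, ← Category.assoc]
    have : hW ≫ (Sigma.desc fun i => f i ≫ Sigma.ι X₂ i)⟦(1 : ℤ)⟧' = 0 := by
      exact comp_distTriang_mor_zero₃₁ _ hdtW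
    rw [this, zero_comp]
  -- surjectivity of precomposition with c
  have hsurj : ∀ {V : T} (z : (∐ X₃) ⟶ V), ∃ x : W ⟶ V, c ≫ x = z := by
    intro V z
    have hq : TW.mor₁ ≫ ((Sigma.desc fun i => g i ≫ Sigma.ι X₃ i) ≫ z) = 0 := by
      apply Sigma.hom_ext
      intro i
      have : f i ≫ g i = 0 := comp_distTriang_mor_zero₁₂ _ (hd i)
      show Sigma.ι X₁ i ≫ (Sigma.desc fun i => f i ≫ Sigma.ι X₂ i) ≫ (Sigma.desc fun i => g i ≫ Sigma.ι X₃ i) ≫ z = Sigma.ι X₁ i ≫ 0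
      simp [TW, reassoc_of% this]
    obtain ⟨x₀, hx₀⟩ := Triangle.yoneda_exact₂ _ hdtW _ hq
    let x₁ : W ⟶ V := x₀
    have hx₁ : (Sigma.desc fun i => g i ≫ Sigma.ι X₃ i) ≫ z = gW ≫ x₁ := hx₀
    have hd_i : ∀ i, ∃ w : (X₁ i)⟦(1 : ℤ)⟧ ⟶ V,
        Sigma.ι X₃ i ≫ z - cc i ≫ x₁ = h i ≫ w := by
      intro i
      have key : g i ≫ cc i ≫ x₁ = g i ≫ Sigma.ι X₃ i ≫ z := by
        rw [← Category.assoc, hc1 i, Category.assoc, ← hx₁]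
        simp
      have hgd : g i ≫ (Sigma.ι X₃ i ≫ z - cc i ≫ x₁) = 0 := by
        rw [Preadditive.comp_sub, key, sub_self]
      obtain ⟨w, hw⟩ := Triangle.yoneda_exact₂ _ (rot_of_distTriang _ (hd i))
        (Sigma.ι X₃ i ≫ z - cc i ≫ x₁) (by exact hgd)
      exact ⟨w, by exact hw⟩
    choose ww hww using hd_i
    obtain ⟨w, hw⟩ := sigma_shift_desc (1 : ℤ) X₁ ww
    refine ⟨x₁ + hW ≫ w, ?_⟩
    apply Sigma.hom_ext
    intro i
    have e3 : Sigma.ι X₃ i ≫ c = cc i := by simp [c]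
    rw [← Category.assoc, e3, Preadditive.comp_add]
    calc cc i ≫ x₁ + cc i ≫ hW ≫ w
        = cc i ≫ x₁ + (cc i ≫ hW) ≫ w := by rw [Category.assoc]
      _ = cc i ≫ x₁ + (h i ≫ (Sigma.ι X₁ i)⟦(1 : ℤ)⟧') ≫ w := by rw [← hc2 i]
      _ = cc i ≫ x₁ + h i ≫ ww i := by rw [Category.assoc, hw i]
      _ = cc i ≫ x₁ + (Sigma.ι X₃ i ≫ z - cc i ≫ x₁) := by rw [hww i]
      _ = Sigma.ι X₃ i ≫ z := by abel
  -- c is an isomorphism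
  obtain ⟨d, hdinv⟩ := hsurj (𝟙 (∐ X₃))
  have hdc : d ≫ c = 𝟙 W := by
    have : c ≫ (d ≫ c - 𝟙 W) = 0 := by
      rw [Preadditive.comp_sub, ← Category.assoc, hdinv]
      simp
    have := hinj _ this
    rw [sub_eq_zero] at this
    exact this
  haveI : IsIso c := ⟨d, ⟨hdinv, hdc⟩⟩
  refine isomorphic_distinguished _ hdtW _ ?_
  refine Triangle.isoMk _ _ (Iso.refl _) (Iso.refl _) (@asIso _ _ (∐ X₃) W c this) ?_ ?_ ?_
  · exact (Category.comp_id _).trans (Category.id_comp _).symm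
  · apply Sigma.hom_ext
    intro i
    have : Sigma.ι X₃ i ≫ c = cc i := by simp [c]
    show Sigma.ι X₂ i ≫ (Sigma.desc fun i => g i ≫ Sigma.ι X₃ i) ≫ c = Sigma.ι X₂ i ≫ 𝟙 _ ≫ gW
    simp [TW, this, hc1 i]
  · apply Sigma.hom_ext
    intro i
    have e3 : Sigma.ι X₃ i ≫ c = cc i := by simp [c]
    dsimp
    show Sigma.ι X₃ i ≫ (Sigma.desc fun i => h i ≫ (Sigma.ι X₁ i)⟦(1 : ℤ)⟧') ≫ (𝟙 (∐ X₁))⟦(1 : ℤ)⟧' = Sigma.ι X₃ i ≫ Sigma.desc cc ≫ hW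
    simp [c, TW, hc2 i]

end Coprod
end TData

/-- Iterates of the shift endomorphism. -/
noncomputable def pwA (A : ℕ ⥤ T) : ℕ → ((∐ fun i => A.obj i) ⟶ ∐ fun i => A.obj i)
  | 0 => 𝟙 _
  | k + 1 => pwA A k ≫ seqShift T A

lemma ι_seqShift (A : ℕ ⥤ T) (i : ℕ) :
    Sigma.ι (fun i => A.obj i) i ≫ seqShift T A =
      A.map (homOfLE (Nat.le_succ i)) ≫ Sigma.ι (fun i => A.obj i) (i + 1) := by
  simp [seqShift]

lemma ι_pwA (A : ℕ ⥤ T) (k i j : ℕ) (hj : j = i + k) :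
    Sigma.ι (fun i => A.obj i) i ≫ pwA A k =
      A.map (homOfLE (by omega)) ≫ Sigma.ι (fun i => A.obj i) j := by
  subst hj
  induction k with
  | zero =>
    have : A.map (homOfLE (by omega : i ≤ i + 0)) = 𝟙 _ := by
      rw [show homOfLE (by omega : i ≤ i + 0) = 𝟙 i from Subsingleton.elim _ _, A.map_id]
    rw [pwA, Category.comp_id, this, Category.id_comp]
    rfl
  | succ k ih =>
    rw [pwA, ← Category.assoc, ih, Category.assoc, ι_seqShift, ← Category.assoc,
      ← A.map_comp, homOfLE_comp]
    rfl

lemma tel (A : ℕ ⥤ T) (K : ℕ) :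
    (∑ u ∈ Finset.range K, pwA A u) ≫ (𝟙 (∐ fun i => A.obj i) - seqShift T A) =
      𝟙 _ - pwA A K := by
  induction K with
  | zero => simp [pwA]
  | succ k ih =>
    rw [Finset.sum_range_succ, Preadditive.add_comp, ih]
    have : pwA A k ≫ (𝟙 (∐ fun i => A.obj i) - seqShift T A) = pwA A k - pwA A (k + 1) := by
      rw [Preadditive.comp_sub, Category.comp_id]; rfl
    rw [this]
    abel

section ConstY

variable (Y : T)

/-- shift map of the constant sequence -/
noncomputable def sConst : (∐ fun _ : ℕ => Y) ⟶ ∐ fun _ : ℕ => Y :=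
  Sigma.desc fun i => Sigma.ι (fun _ : ℕ => Y) (i + 1)

noncomputable def foldConst : (∐ fun _ : ℕ => Y) ⟶ Y := Sigma.desc fun _ => 𝟙 Y

noncomputable def sigmaConst : (∐ fun _ : ℕ => Y) ⟶ ∐ fun _ : ℕ => Y :=
  Sigma.desc fun i => ∑ k ∈ Finset.range (i + 1), Sigma.ι (fun _ : ℕ => Y) k

lemma sConst_sigmaConst : sConst Y ≫ sigmaConst Y = sigmaConst Y + sConst Y := by
  apply Sigma.hom_ext
  intro i
  simp only [Preadditive.comp_add, sConst, sigmaConst, colimit.ι_desc_assoc, colimit.ι_desc]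
  dsimp
  rw [colimit.ι_desc]
  dsimp
  rw [Finset.sum_range_succ]

/-- If `y` is `sConst`-invariant then it vanishes. -/
lemma eq_zero_of_sConst_inv {V : T} (y : V ⟶ ∐ fun _ : ℕ => Y) (hy : y ≫ sConst Y = y) :
    y = 0 := by
  have h1 : y ≫ sigmaConst Y = y ≫ sigmaConst Y + y ≫ sConst Y := by
    conv_lhs => rw [← hy]
    rw [Category.assoc, sConst_sigmaConst, Preadditive.comp_add]
  have h2 : y ≫ sConst Y = 0 := by
    have := congrArg (fun q => q - y ≫ sigmaConst Y) h1
    simpa using this.symm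
  rw [← hy, h2]

lemma sigmaConst_one_sub : sigmaConst Y ≫ (𝟙 (∐ fun _ : ℕ => Y) - sConst Y) =
    foldConst Y ≫ Sigma.ι (fun _ : ℕ => Y) 0 - sConst Y := by
  apply Sigma.hom_ext
  intro i
  have hs : ∀ k : ℕ, Sigma.ι (fun _ : ℕ => Y) k ≫ sConst Y =
      Sigma.ι (fun _ : ℕ => Y) (k + 1) := by
    intro k; simp [sConst]
  have hSg : Sigma.ι (fun _ : ℕ => Y) i ≫ sigmaConst Y
      = ∑ k ∈ Finset.range (i + 1), Sigma.ι (fun _ : ℕ => Y) k := by simp [sigmaConst]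
  have hfold : Sigma.ι (fun _ : ℕ => Y) i ≫ foldConst Y = 𝟙 Y := by simp [foldConst]
  have tele : ∑ k ∈ Finset.range (i + 1),
      (Sigma.ι (fun _ : ℕ => Y) k - Sigma.ι (fun _ : ℕ => Y) (k + 1)) =
      Sigma.ι (fun _ : ℕ => Y) 0 - Sigma.ι (fun _ : ℕ => Y) (i + 1) := by
    simpa using Finset.sum_range_sub' (fun k => Sigma.ι (fun _ : ℕ => Y) k) (i + 1)
  calc Sigma.ι (fun _ : ℕ => Y) i ≫ (sigmaConst Y ≫ (𝟙 (∐ fun _ : ℕ => Y) - sConst Y))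
      = (∑ k ∈ Finset.range (i + 1), Sigma.ι (fun _ : ℕ => Y) k) ≫
          (𝟙 (∐ fun _ : ℕ => Y) - sConst Y) := by rw [← Category.assoc, hSg]
    _ = ∑ k ∈ Finset.range (i + 1),
          (Sigma.ι (fun _ : ℕ => Y) k - Sigma.ι (fun _ : ℕ => Y) (k + 1)) := by
        rw [Preadditive.sum_comp]
        congr 1; funext k
        rw [Preadditive.comp_sub, Category.comp_id, hs k]
    _ = Sigma.ι (fun _ : ℕ => Y) 0 - Sigma.ι (fun _ : ℕ => Y) (i + 1) := tele
    _ = Sigma.ι (fun _ : ℕ => Y) i ≫ (foldConst Y ≫ Sigma.ι (fun _ : ℕ => Y) 0 - sConst Y) := by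
        rw [Preadditive.comp_sub, ← Category.assoc, hfold, Category.id_comp, hs i]

/-- If `û ≫ fold = 0` then `û` is in the image of `1 - sConst`. -/
lemma factor_one_sub_sConst {V : T} (u : V ⟶ ∐ fun _ : ℕ => Y) (hu : u ≫ foldConst Y = 0) :
    ∃ z : V ⟶ ∐ fun _ : ℕ => Y, z ≫ (𝟙 _ - sConst Y) = u := by
  refine ⟨u - u ≫ sigmaConst Y, ?_⟩
  rw [Preadditive.sub_comp, Category.assoc, sigmaConst_one_sub]
  rw [Preadditive.comp_sub, Preadditive.comp_sub, Category.comp_id, ← Category.assoc, hu,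
    zero_comp, zero_sub]
  abel

end ConstY

namespace TData

variable (t : TData T)

/-- The truncation sequence of `Y` as a functor `ℕ ⥤ T`. -/
@[simps] noncomputable abbrev truncSeq (Y : T) : ℕ ⥤ T where
  obj i := (t.truncLE (i : ℤ)).obj Y
  map {i j} f := (t.truncLEle (by exact_mod_cast leOfHom f : (i : ℤ) ≤ (j : ℤ))).app Y
  map_id i := by
    have h2 := congrArg (fun (α : t.truncLE (i : ℤ) ⟶ t.truncLE (i : ℤ)) => α.app Y)
      (t.truncLEle_refl (i : ℤ))
    exact h2
  map_comp {i j k} f g := by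
    have h2 := congrArg (fun (α : t.truncLE (i : ℤ) ⟶ t.truncLE (k : ℤ)) => α.app Y)
      (t.truncLEle_trans (by exact_mod_cast leOfHom f : (i : ℤ) ≤ (j : ℤ))
        (by exact_mod_cast leOfHom g : (j : ℤ) ≤ (k : ℤ)))
    exact h2.symm

lemma truncSeq_map_pi (Y : T) {i j : ℕ} (h : i ≤ j) :
    (t.truncSeq Y).map (homOfLE h) ≫ (t.truncLEπ (j : ℤ)).app Y =
      (t.truncLEπ (i : ℤ)).app Y := by
  have h2 := congrArg (fun (α : t.truncLE (i : ℤ) ⟶ 𝟭 T) => α.app Y)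
    (t.truncLEle_π (by exact_mod_cast h : (i : ℤ) ≤ (j : ℤ)))
  exact h2

/-- Coproducts of uniformly bounded-below objects are bounded below. -/
lemma coprod_ge {r : ℤ}
    (hcoprod : ∀ X : ℕ → T, (∀ i, X i ∈ t.ge 0) → (∐ X) ∈ t.ge (-r))
    (X : ℕ → T) (b : ℕ) (hX : ∀ i, X i ∈ t.ge (b : ℤ)) : (∐ X) ∈ t.ge ((b : ℤ) - r) := by
  have hmem : ∀ i, (X i)⟦(b : ℤ)⟧ ∈ t.ge 0 := fun i => by
    simpa using t.ge_shift_nat (hX i) b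
  have h1 : (∐ fun i => (X i)⟦(b : ℤ)⟧) ∈ t.ge (-r) := hcoprod _ hmem
  obtain ⟨u, hu⟩ := sigma_shift_desc (b : ℤ) X (fun j => Sigma.ι (fun i => (X i)⟦(b : ℤ)⟧) j)
  have huv : u ≫ (Sigma.desc fun j => (Sigma.ι X j)⟦(b : ℤ)⟧') = 𝟙 _ := by
    apply sigma_shift_hom_ext (b : ℤ)
    intro j
    rw [← Category.assoc, hu j]
    simp
  have hvu : (Sigma.desc fun j => (Sigma.ι X j)⟦(b : ℤ)⟧') ≫ u = 𝟙 _ := by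
    apply Sigma.hom_ext
    intro j
    simp [hu j]
  have h2 : (∐ X)⟦(b : ℤ)⟧ ∈ t.ge (-r) :=
    t.ge_iso _ (Iso.mk (Sigma.desc fun j => (Sigma.ι X j)⟦(b : ℤ)⟧') u hvu huv) h1
  have h3 := t.ge_shift_neg_nat h2 b
  have h4 := t.ge_iso _ ((shiftFunctorCompIsoId T (b : ℤ) (-(b : ℤ)) (by ring)).app (∐ X)) h3
  have : (b : ℤ) - r = -r + b := by ring
  rw [this]
  exact h4

section Tail

variable (Y : T) (K : ℕ)

noncomputable abbrev tailObj : T := ∐ fun i => (t.truncSeq Y).obj (K + i)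

noncomputable def tailIncl : t.tailObj Y K ⟶ ∐ fun i => (t.truncSeq Y).obj i :=
  Sigma.desc fun i => Sigma.ι (fun i => (t.truncSeq Y).obj i) (K + i)

noncomputable def tailShift : t.tailObj Y K ⟶ t.tailObj Y K :=
  Sigma.desc fun i => (t.truncSeq Y).map (homOfLE (by omega : K + i ≤ K + (i + 1))) ≫
    Sigma.ι (fun i => (t.truncSeq Y).obj (K + i)) (i + 1)

noncomputable def tailP : t.tailObj Y K ⟶ ∐ fun _ : ℕ => Y :=
  Sigma.desc fun i => (t.truncLEπ ((K + i : ℕ) : ℤ)).app Y ≫ Sigma.ι (fun _ : ℕ => Y) i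

noncomputable def tailSigma : (∐ fun i => (t.truncSeq Y).obj i) ⟶ t.tailObj Y K :=
  Sigma.desc fun i => (t.truncSeq Y).map (homOfLE (by omega : i ≤ K + i)) ≫
    Sigma.ι (fun i => (t.truncSeq Y).obj (K + i)) i

noncomputable def tailRho : (∐ fun i => (t.truncSeq Y).obj i) ⟶ t.tailObj Y K :=
  Sigma.desc fun j =>
    if h : K ≤ j then
      (t.truncSeq Y).map (homOfLE (by omega : j ≤ K + (j - K))) ≫
        Sigma.ι (fun i => (t.truncSeq Y).obj (K + i)) (j - K)
    else 0

noncomputable def piTot : (∐ fun i => (t.truncSeq Y).obj i) ⟶ Y :=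
  Sigma.desc fun i => (t.truncLEπ ((i : ℕ) : ℤ)).app Y

lemma tailIncl_seqShift :
    t.tailIncl Y K ≫ seqShift T (t.truncSeq Y) = t.tailShift Y K ≫ t.tailIncl Y K := by
  apply Sigma.hom_ext
  intro i
  simp only [tailIncl, tailShift, colimit.ι_desc_assoc, Cofan.mk_ι_app, seqShift,
    colimit.ι_desc, Category.assoc]
  rfl

lemma tailShift_tailP :
    t.tailShift Y K ≫ t.tailP Y K = t.tailP Y K ≫ sConst Y := by
  apply Sigma.hom_ext
  intro i
  simp only [tailShift, tailP, sConst, colimit.ι_desc_assoc, Cofan.mk_ι_app,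
    colimit.ι_desc, Category.assoc]
  rw [← Category.assoc]
  have := t.truncSeq_map_pi Y (show K + i ≤ K + (i + 1) by omega)
  rw [this]

lemma tailIncl_piTot :
    t.tailIncl Y K ≫ t.piTot Y = t.tailP Y K ≫ foldConst Y := by
  apply Sigma.hom_ext
  intro i
  simp only [tailIncl, tailP, piTot, foldConst, colimit.ι_desc_assoc, Cofan.mk_ι_app,
    colimit.ι_desc, Category.assoc, Category.comp_id]
  simp

lemma tailIncl_tailRho : t.tailIncl Y K ≫ t.tailRho Y K = 𝟙 _ := by
  apply Sigma.hom_ext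
  intro i
  simp only [tailIncl, tailRho, colimit.ι_desc_assoc, Cofan.mk_ι_app, Category.comp_id]
  rw [colimit.ι_desc]
  dsimp only [Cofan.mk_ι_app]
  rw [dif_pos (by omega : K ≤ K + i)]
  have gen : ∀ (a : ℕ) (ha : i = a) (hle : K + i ≤ K + a),
      (t.truncSeq Y).map (homOfLE hle) ≫ Sigma.ι (fun i => (t.truncSeq Y).obj (K + i)) a =
      Sigma.ι (fun i => (t.truncSeq Y).obj (K + i)) i := by
    intro a ha hle
    subst ha
    rw [show homOfLE hle = 𝟙 (K + i) from Subsingleton.elim _ _,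
      CategoryTheory.Functor.map_id, Category.id_comp]
  have rhs : Sigma.ι (fun i => (t.truncSeq Y).obj (K + i)) i ≫ 𝟙 (t.tailObj Y K) =
      Sigma.ι (fun i => (t.truncSeq Y).obj (K + i)) i := Category.comp_id _
  exact gen (K + i - K) (by omega) (by omega)

lemma tailSigma_tailIncl :
    t.tailSigma Y K ≫ t.tailIncl Y K = pwA (t.truncSeq Y) K := by
  apply Sigma.hom_ext
  intro i
  simp only [tailSigma, tailIncl, colimit.ι_desc_assoc, Cofan.mk_ι_app, Category.assoc,
    colimit.ι_desc]
  rw [ι_pwA (t.truncSeq Y) K i (K + i) (by omega)]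

lemma piTot_seqShift : seqShift T (t.truncSeq Y) ≫ t.piTot Y = t.piTot Y := by
  apply Sigma.hom_ext
  intro i
  rw [← Category.assoc, ι_seqShift]
  simp only [piTot, colimit.ι_desc, Cofan.mk_ι_app, Category.assoc]
  exact t.truncSeq_map_pi Y (Nat.le_succ i)


lemma tail_triangle (r : ℤ)
    (hcoprod : ∀ X : ℕ → T, (∀ i, X i ∈ t.ge 0) → (∐ X) ∈ t.ge (-r)) :
    ∃ (Q : T) (q : (∐ fun _ : ℕ => Y) ⟶ Q) (hq : Q ⟶ (t.tailObj Y K)⟦(1 : ℤ)⟧),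
      (Triangle.mk (t.tailP Y K) q hq ∈ distTriang T) ∧ Q ∈ t.ge ((K : ℤ) + 1 - r) := by
  choose hh hdist using fun i : ℕ => t.trunc_triangle ((K + i : ℕ) : ℤ) Y
  have hdt := coprod_triangle_dist (fun i => (t.truncSeq Y).obj (K + i)) (fun _ : ℕ => Y)
    (fun i => (t.truncGE (((K + i : ℕ) : ℤ) + 1)).obj Y)
    (fun i => (t.truncLEπ ((K + i : ℕ) : ℤ)).app Y)
    (fun i => (t.truncGEι (((K + i : ℕ) : ℤ) + 1)).app Y) hh (fun i => hdist i)
  refine ⟨_, _, _, hdt, ?_⟩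
  have hmem : ∀ i : ℕ, (t.truncGE (((K + i : ℕ) : ℤ) + 1)).obj Y ∈ t.ge ((K + 1 : ℕ) : ℤ) := by
    intro i
    apply t.ge_anti (show ((K + 1 : ℕ) : ℤ) ≤ ((K + i : ℕ) : ℤ) + 1 by push_cast; omega)
    exact t.truncGE_mem _ _
  have := t.coprod_ge hcoprod _ (K + 1) hmem
  have hcast : ((K + 1 : ℕ) : ℤ) - r = (K : ℤ) + 1 - r := by push_cast; ring
  rwa [hcast] at this

lemma tailP_inj (r : ℤ)
    (hcoprod : ∀ X : ℕ → T, (∀ i, X i ∈ t.ge 0) → (∐ X) ∈ t.ge (-r))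
    {m : ℤ} {V : T} (hV : V ∈ t.le m) (hK : m + r + 1 ≤ (K : ℤ))
    {u₁ u₂ : V ⟶ t.tailObj Y K} (h : u₁ ≫ t.tailP Y K = u₂ ≫ t.tailP Y K) : u₁ = u₂ := by
  obtain ⟨Q, q, hq, hdt, hQ⟩ := t.tail_triangle Y K r hcoprod
  have hsub : (u₁ - u₂) ≫ t.tailP Y K = 0 := by
    rw [Preadditive.sub_comp, sub_eq_zero]; exact h
  obtain ⟨g, hg⟩ := Triangle.coyoneda_exact₂ _ (inv_rot_of_distTriang _ hdt) (u₁ - u₂)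
    (by exact hsub)
  have hgz : g = 0 := t.homZeroIntoNegShift (show m - 1 < (K : ℤ) + 1 - r by omega) hV hQ g
  rw [← sub_eq_zero]
  rw [hgz, zero_comp] at hg; exact hg

lemma tailP_surj (r : ℤ)
    (hcoprod : ∀ X : ℕ → T, (∀ i, X i ∈ t.ge 0) → (∐ X) ∈ t.ge (-r))
    {m : ℤ} {V : T} (hV : V ∈ t.le m) (hK : m + r + 1 ≤ (K : ℤ))
    (y : V ⟶ ∐ fun _ : ℕ => Y) : ∃ u : V ⟶ t.tailObj Y K, u ≫ t.tailP Y K = y := by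
  obtain ⟨Q, q, hq, hdt, hQ⟩ := t.tail_triangle Y K r hcoprod
  have hy : y ≫ q = 0 := t.hom_zero (show m < (K : ℤ) + 1 - r by omega) hV hQ _
  obtain ⟨u, hu⟩ := Triangle.coyoneda_exact₂ _ hdt y hy
  exact ⟨u, hu.symm⟩

end Tail

section Telescope

variable (Y : T)

lemma pwA_inv {V : T} {v : V ⟶ ∐ fun i => (t.truncSeq Y).obj i}
    (hv : v ≫ seqShift T (t.truncSeq Y) = v) (k : ℕ) : v ≫ pwA (t.truncSeq Y) k = v := by
  induction k with
  | zero => rw [pwA, Category.comp_id]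
  | succ n ih => rw [pwA, ← Category.assoc, ih, hv]

/-- (†): a `seqShift`-invariant map from a bounded-above object vanishes. -/
lemma seqShift_inv_vanish (r : ℤ)
    (hcoprod : ∀ X : ℕ → T, (∀ i, X i ∈ t.ge 0) → (∐ X) ∈ t.ge (-r))
    {m : ℤ} {V : T} (hV : V ∈ t.le m)
    (v : V ⟶ ∐ fun i => (t.truncSeq Y).obj i)
    (hv : v ≫ seqShift T (t.truncSeq Y) = v) : v = 0 := by
  set K : ℕ := (m + r + 1).toNat with hKdef
  have hK : m + r + 1 ≤ (K : ℤ) := Int.self_le_toNat _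
  set u : V ⟶ t.tailObj Y K := v ≫ t.tailSigma Y K with hu
  have hincl : u ≫ t.tailIncl Y K = v := by
    rw [hu, Category.assoc, t.tailSigma_tailIncl]
    exact t.pwA_inv Y hv K
  have hstep : (u ≫ t.tailShift Y K) ≫ t.tailIncl Y K = u ≫ t.tailIncl Y K := by
    rw [Category.assoc, ← t.tailIncl_seqShift, ← Category.assoc, hincl, hv]
  have hshift : u ≫ t.tailShift Y K = u := by
    have := congrArg (fun q => q ≫ t.tailRho Y K) hstep
    simpa [Category.assoc, t.tailIncl_tailRho] using this
  have hy : (u ≫ t.tailP Y K) ≫ sConst Y = u ≫ t.tailP Y K := by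
    rw [Category.assoc, ← t.tailShift_tailP, ← Category.assoc, hshift]
  have hy0 : u ≫ t.tailP Y K = 0 := eq_zero_of_sConst_inv Y _ hy
  have hu0 : u = 0 := by
    apply t.tailP_inj Y K r hcoprod hV hK (u₂ := 0)
    rw [hy0, zero_comp]
  rw [← hincl, hu0, zero_comp]

/-- (‡): a map killed by `piTot` factors through `1 - seqShift`. -/
lemma factor_one_sub_seqShift (r : ℤ)
    (hcoprod : ∀ X : ℕ → T, (∀ i, X i ∈ t.ge 0) → (∐ X) ∈ t.ge (-r))
    {m : ℤ} {V : T} (hV : V ∈ t.le m)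
    (w : V ⟶ ∐ fun i => (t.truncSeq Y).obj i) (hw : w ≫ t.piTot Y = 0) :
    ∃ x, x ≫ (𝟙 (∐ fun i => (t.truncSeq Y).obj i) - seqShift T (t.truncSeq Y)) = w := by
  set K : ℕ := (m + r + 1).toNat with hKdef
  have hK : m + r + 1 ≤ (K : ℤ) := Int.self_le_toNat _
  set x₀ : V ⟶ ∐ fun i => (t.truncSeq Y).obj i :=
    w ≫ ∑ u ∈ Finset.range K, pwA (t.truncSeq Y) u with hx₀
  have htel : x₀ ≫ (𝟙 _ - seqShift T (t.truncSeq Y)) = w - w ≫ pwA (t.truncSeq Y) K := by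
    rw [hx₀, Category.assoc, tel, Preadditive.comp_sub, Category.comp_id]
  -- the tail part
  have hpwπ : ∀ k, pwA (t.truncSeq Y) k ≫ t.piTot Y = t.piTot Y := by
    intro k
    induction k with
    | zero => rw [pwA, Category.id_comp]
    | succ n ih => rw [pwA, Category.assoc, t.piTot_seqShift, ih]
  set u : V ⟶ t.tailObj Y K := w ≫ t.tailSigma Y K with hu
  have hincl : u ≫ t.tailIncl Y K = w ≫ pwA (t.truncSeq Y) K := by
    rw [hu, Category.assoc, t.tailSigma_tailIncl]
  have hufold : (u ≫ t.tailP Y K) ≫ foldConst Y = 0 := by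
    have h1 : u ≫ t.tailIncl Y K ≫ t.piTot Y = 0 := by
      rw [← Category.assoc, hincl, Category.assoc, hpwπ K, hw]
    rw [Category.assoc, ← t.tailIncl_piTot, h1]
  obtain ⟨z, hz⟩ := factor_one_sub_sConst Y (u ≫ t.tailP Y K) hufold
  obtain ⟨y, hyz⟩ := t.tailP_surj Y K r hcoprod hV hK z
  have hyu : y ≫ (𝟙 _ - t.tailShift Y K) = u := by
    apply t.tailP_inj Y K r hcoprod hV hK
    rw [Category.assoc]
    have hcomm : (𝟙 _ - t.tailShift Y K) ≫ t.tailP Y K =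
        t.tailP Y K ≫ (𝟙 _ - sConst Y) := by
      rw [Preadditive.sub_comp, Preadditive.comp_sub, Category.id_comp, Category.comp_id,
        t.tailShift_tailP]
    rw [hcomm, ← Category.assoc, hyz, hz]
  refine ⟨x₀ + y ≫ t.tailIncl Y K, ?_⟩
  rw [Preadditive.add_comp, htel]
  have h2 : (𝟙 _ - t.tailShift Y K) ≫ t.tailIncl Y K =
      t.tailIncl Y K ≫ (𝟙 _ - seqShift T (t.truncSeq Y)) := by
    rw [Preadditive.sub_comp, Preadditive.comp_sub, Category.id_comp, Category.comp_id,
      t.tailIncl_seqShift]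
  have h3 : (y ≫ t.tailIncl Y K) ≫ (𝟙 _ - seqShift T (t.truncSeq Y)) =
      w ≫ pwA (t.truncSeq Y) K := by
    calc (y ≫ t.tailIncl Y K) ≫ (𝟙 _ - seqShift T (t.truncSeq Y))
        = y ≫ (t.tailIncl Y K ≫ (𝟙 _ - seqShift T (t.truncSeq Y))) := Category.assoc _ _ _
      _ = y ≫ ((𝟙 _ - t.tailShift Y K) ≫ t.tailIncl Y K) := by rw [← h2]
      _ = (y ≫ (𝟙 _ - t.tailShift Y K)) ≫ t.tailIncl Y K := (Category.assoc _ _ _).symm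
      _ = u ≫ t.tailIncl Y K := by rw [hyu]
      _ = w ≫ pwA (t.truncSeq Y) K := hincl
  rw [h3]
  abel

end Telescope

section Main

variable (Y : T)

lemma one_sub_seqShift_piTot :
    (𝟙 (∐ fun i => (t.truncSeq Y).obj i) - seqShift T (t.truncSeq Y)) ≫ t.piTot Y = 0 := by
  rw [Preadditive.sub_comp, Category.id_comp, t.piTot_seqShift, sub_self]

/-- The homotopy colimit of the truncation sequence of `Y` is `Y`. -/
lemma hocolim_exists
    (hnd : ∀ X : T, (∀ n : ℤ, X ∈ t.ge n) → IsZero X) (r : ℤ)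
    (hcoprod : ∀ X : ℕ → T, (∀ i, X i ∈ t.ge 0) → (∐ X) ∈ t.ge (-r)) :
    ∃ (X : T) (π : (∐ fun i => (t.truncSeq Y).obj i) ⟶ X),
      IsHocolim T (t.truncSeq Y) X π ∧ Nonempty (X ≅ Y) := by
  obtain ⟨C, g, h, hdt⟩ :=
    distinguished_cocone_triangle (𝟙 (∐ fun i => (t.truncSeq Y).obj i) - seqShift T (t.truncSeq Y))
  obtain ⟨φ₀, hφ₀⟩ := Triangle.yoneda_exact₂ _ hdt (t.piTot Y) (t.one_sub_seqShift_piTot Y)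
  let φ : C ⟶ Y := φ₀
  have hφ : t.piTot Y = g ≫ φ := hφ₀
  -- surjectivity
  have SUR : ∀ {m : ℤ} {W : T}, W ∈ t.le m → ∀ yW : W ⟶ Y, ∃ cW : W ⟶ C, cW ≫ φ = yW := by
    intro m W hW yW
    obtain ⟨f, hf⟩ := t.pi_postcomp_surj (Int.self_le_toNat m) Y hW yW
    refine ⟨f ≫ Sigma.ι (fun i => (t.truncSeq Y).obj i) m.toNat ≫ g, ?_⟩
    rw [Category.assoc, Category.assoc, ← hφ]
    have : Sigma.ι (fun i => (t.truncSeq Y).obj i) m.toNat ≫ t.piTot Y =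
        (t.truncLEπ ((m.toNat : ℕ) : ℤ)).app Y := by
      simp [piTot]
    rw [this, hf]
  -- injectivity
  have INJ : ∀ {m : ℤ} {W : T}, W ∈ t.le m → ∀ cW : W ⟶ C, cW ≫ φ = 0 → cW = 0 := by
    intro m W hW cW hc
    -- step 1 : cW ≫ h = 0
    have hch : cW ≫ h = 0 := by
      have hx : (cW ≫ h) ≫ (𝟙 _ - seqShift T (t.truncSeq Y))⟦(1 : ℤ)⟧' = 0 := by
        rw [Category.assoc]
        have hz : h ≫ (𝟙 (∐ fun i => (t.truncSeq Y).obj i) -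
            seqShift T (t.truncSeq Y))⟦(1 : ℤ)⟧' = 0 := comp_distTriang_mor_zero₃₁ _ hdt
        rw [hz, comp_zero]
      -- transfer to a map W⟦-1⟧ ⟶ S
      set x' : W⟦(-1 : ℤ)⟧ ⟶ (∐ fun i => (t.truncSeq Y).obj i) :=
        (adjNP.homEquiv W _).symm (cW ≫ h) with hx'def
      have hnat : (adjNP.homEquiv W _) (x' ≫ (𝟙 _ - seqShift T (t.truncSeq Y))) = 0 := by
        rw [Adjunction.homEquiv_naturality_right, hx'def, Equiv.apply_symm_apply, hx]
      have hx'inv : x' ≫ (𝟙 _ - seqShift T (t.truncSeq Y)) = 0 := by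
        have := congrArg (adjNP.homEquiv W _).symm hnat
        rwa [Equiv.symm_apply_apply, adj_homEquiv_symm_zero] at this
      have hx'shift : x' ≫ seqShift T (t.truncSeq Y) = x' := by
        have := hx'inv
        rw [Preadditive.comp_sub, Category.comp_id, sub_eq_zero] at this
        exact this.symm
      have hx'0 : x' = 0 :=
        t.seqShift_inv_vanish Y r hcoprod (t.le_shift_neg hW) x' hx'shift
      have : cW ≫ h = (adjNP.homEquiv W _) x' := by
        rw [hx'def, Equiv.apply_symm_apply]
      rw [this, hx'0, adj_homEquiv_zero]
    -- step 2 : cW factors through g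
    obtain ⟨(w : W ⟶ ∐ fun i => (t.truncSeq Y).obj i), hwg⟩ := Triangle.coyoneda_exact₂ _ (rot_of_distTriang _ hdt) cW
      (by exact hch)
    have hwg' : cW = w ≫ g := hwg
    have hwπ : w ≫ t.piTot Y = 0 := by
      rw [hφ, ← Category.assoc, ← hwg', hc]
    obtain ⟨x, hxw⟩ := t.factor_one_sub_seqShift Y r hcoprod hW w hwπ
    rw [hwg', ← hxw, Category.assoc]
    have : (𝟙 _ - seqShift T (t.truncSeq Y)) ≫ g = 0 := comp_distTriang_mor_zero₁₂ _ hdt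
    rw [this, comp_zero]
  -- the cone of φ vanishes
  obtain ⟨D, uD, vD, hdtD⟩ := distinguished_cocone_triangle φ
  have hDge : ∀ n : ℤ, D ∈ t.ge n := by
    intro n
    apply t.mem_ge_of_homzero
    intro W hW d
    have hdv : d ≫ vD = 0 := by
      have hx : (d ≫ vD) ≫ φ⟦(1 : ℤ)⟧' = 0 := by
        rw [Category.assoc]
        have hz : vD ≫ φ⟦(1 : ℤ)⟧' = 0 := comp_distTriang_mor_zero₃₁ _ hdtD
        rw [hz, comp_zero]
      set x' : W⟦(-1 : ℤ)⟧ ⟶ C := (adjNP.homEquiv W C).symm (d ≫ vD) with hx'def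
      have hnat : (adjNP.homEquiv W Y) (x' ≫ φ) = 0 := by
        rw [Adjunction.homEquiv_naturality_right, hx'def, Equiv.apply_symm_apply, hx]
      have hx'φ : x' ≫ φ = 0 := by
        have := congrArg (adjNP.homEquiv W Y).symm hnat
        rwa [Equiv.symm_apply_apply, adj_homEquiv_symm_zero] at this
      have hx'0 : x' = 0 := INJ (t.le_shift_neg hW) x' hx'φ
      have : d ≫ vD = (adjNP.homEquiv W C) x' := by
        rw [hx'def, Equiv.apply_symm_apply]
      rw [this, hx'0, adj_homEquiv_zero]
    obtain ⟨(yW : W ⟶ Y), hyW⟩ := Triangle.coyoneda_exact₂ _ (rot_of_distTriang _ hdtD) d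
      (by exact hdv)
    have hyW' : d = yW ≫ uD := hyW
    obtain ⟨cW, hcW⟩ := SUR hW yW
    rw [hyW', ← hcW, Category.assoc]
    have : φ ≫ uD = 0 := comp_distTriang_mor_zero₁₂ _ hdtD
    rw [this, comp_zero]
  have hDzero : IsZero D := hnd D hDge
  have hiso : IsIso φ := by
    have := (Triangle.isZero₃_iff_isIso₁ _ hdtD).1 hDzero
    exact this
  exact ⟨C, g, ⟨h, hdt⟩, ⟨asIso φ⟩⟩

end Main
end TData

namespace TData

variable (t : TData T)

lemma truncSeq_obj_ge {q : ℤ} {Y : T} (hY : Y ∈ t.ge q) (j : ℕ) :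
    (t.truncSeq Y).obj j ∈ t.ge (min q ((j : ℤ) + 2)) := by
  apply t.mem_ge_of_homzero
  intro W hW f
  obtain ⟨h3, hdt⟩ := t.trunc_triangle (j : ℤ) Y
  have hfπ : f ≫ (t.truncLEπ (j : ℤ)).app Y = 0 :=
    t.hom_zero (show min q ((j : ℤ) + 2) - 1 < q by omega) hW hY _
  obtain ⟨g, hg⟩ := Triangle.coyoneda_exact₂ _ (inv_rot_of_distTriang _ hdt) f
    (by exact hfπ)
  have hgz : g = 0 := t.homZeroIntoNegShift
    (show min q ((j : ℤ) + 2) - 1 - 1 < (j : ℤ) + 1 by omega) hW (t.truncGE_mem _ _) g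
  rw [hgz, zero_comp] at hg; exact hg

end TData

lemma coneIn_of_exists (P : Set T) (hP : ∀ ⦃A B : T⦄, (A ≅ B) → A ∈ P → B ∈ P)
    {X' Y' : T} (f : X' ⟶ Y')
    (hex : ∃ (Z : T) (g : Y' ⟶ Z) (h : Z ⟶ X'⟦(1 : ℤ)⟧),
      (Triangle.mk f g h ∈ distTriang T) ∧ Z ∈ P) :
    coneIn T P f := by
  obtain ⟨Z, g, h, hdt, hZ⟩ := hex
  intro Z' g' h' hdt'
  have e := isoTriangleOfIso₁₂ (Triangle.mk f g h) (Triangle.mk f g' h') hdt hdt'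
    (Iso.refl _) (Iso.refl _) (by exact (Category.comp_id _).trans (Category.id_comp _).symm)
  exact hP (Triangle.π₃.mapIso e) hZ


end Aux

/-- Example 95.13: for a nondegenerate t-structure with countable
coproducts raising `T^{≥0}` by at most `r`, every object of `T⁺` is the homotopy
colimit of a Cauchy sequence in `T^b` (for the metric `Mᵢ = T^b ∩ T^{≥ i}`), and every
object of `T` is the homotopy colimit of a Cauchy sequence in `T⁻`
(for the metric `Mᵢ = T⁻ ∩ T^{≥ i}`). -/
theorem statement18 (t : TData T)
    (hnd : ∀ X : T, (∀ n : ℤ, X ∈ t.ge n) → IsZero X)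
    (hnd' : ∀ X : T, (∀ n : ℤ, X ∈ t.le n) → IsZero X)
    (r : ℤ) (hr : 0 < r)
    (hcoprod : ∀ X : ℕ → T, (∀ i, X i ∈ t.ge 0) → (∐ X) ∈ t.ge (-r)) :
    (∀ Y : T, (∃ i : ℤ, Y ∈ t.ge i) →
      ∃ A : ℕ ⥤ T,
        (∀ j, (∃ p : ℤ, A.obj j ∈ t.le p) ∧ (∃ q : ℤ, A.obj j ∈ t.ge q)) ∧
        (∀ n : ℕ, ∃ N : ℕ, ∀ i j : ℕ, N ≤ i → ∀ h : i ≤ j,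
          coneIn T
            {Z | Z ∈ t.ge (n : ℤ) ∧ (∃ p : ℤ, Z ∈ t.le p) ∧ ∃ q : ℤ, Z ∈ t.ge q}
            (A.map (homOfLE h))) ∧
        ∃ (X : T) (π : (∐ fun i => A.obj i) ⟶ X),
          IsHocolim T A X π ∧ Nonempty (X ≅ Y)) ∧
    (∀ Y : T,
      ∃ A : ℕ ⥤ T,
        (∀ j, ∃ p : ℤ, A.obj j ∈ t.le p) ∧
        (∀ n : ℕ, ∃ N : ℕ, ∀ i j : ℕ, N ≤ i → ∀ h : i ≤ j,
          coneIn T {Z | Z ∈ t.ge (n : ℤ) ∧ ∃ p : ℤ, Z ∈ t.le p}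
            (A.map (homOfLE h))) ∧
        ∃ (X : T) (π : (∐ fun i => A.obj i) ⟶ X),
          IsHocolim T A X π ∧ Nonempty (X ≅ Y)) := by
  constructor
  · rintro Y ⟨q, hYq⟩
    refine ⟨t.truncSeq Y, ?_, ?_, t.hocolim_exists Y hnd r hcoprod⟩
    · intro j
      exact ⟨⟨(j : ℤ), t.truncLE_mem _ _⟩, ⟨min q ((j : ℤ) + 2), t.truncSeq_obj_ge hYq j⟩⟩
    · intro n
      refine ⟨n, ?_⟩
      intro i j hNi hij
      apply coneIn_of_exists
      · rintro A B e ⟨h1, ⟨p, hp⟩, ⟨q', hq⟩⟩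
        exact ⟨t.ge_iso _ e h1, ⟨p, t.le_iso _ e hp⟩, ⟨q', t.ge_iso _ e hq⟩⟩
      · obtain ⟨Z, g, h, hdt, hge, hle⟩ :=
          t.cauchy_triangle (show (i : ℤ) ≤ (j : ℤ) by exact_mod_cast hij) Y
        refine ⟨Z, g, h, hdt, ?_⟩
        exact ⟨t.ge_anti (show ((n : ℕ) : ℤ) ≤ (i : ℤ) + 1 by exact_mod_cast by omega) hge,
          ⟨(j : ℤ), hle⟩, ⟨(i : ℤ) + 1, hge⟩⟩
  · intro Y
    refine ⟨t.truncSeq Y, ?_, ?_, t.hocolim_exists Y hnd r hcoprod⟩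
    · intro j
      exact ⟨(j : ℤ), t.truncLE_mem _ _⟩
    · intro n
      refine ⟨n, ?_⟩
      intro i j hNi hij
      apply coneIn_of_exists
      · rintro A B e ⟨h1, ⟨p, hp⟩⟩
        exact ⟨t.ge_iso _ e h1, ⟨p, t.le_iso _ e hp⟩⟩
      · obtain ⟨Z, g, h, hdt, hge, hle⟩ :=
          t.cauchy_triangle (show (i : ℤ) ≤ (j : ℤ) by exact_mod_cast hij) Y
        refine ⟨Z, g, h, hdt, ?_⟩
        exact ⟨t.ge_anti (show ((n : ℕ) : ℤ) ≤ (i : ℤ) + 1 by exact_mod_cast by omega) hge,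
          ⟨(j : ℤ), hle⟩⟩


end Paper
end
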